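/- Suppose α is a limit point of the class fix(κ,Γ) of ordinals fixed by all Γ-generic embeddings with critical point κ, and cf(α) ∈ fix(κ,Γ). Then α ∈ fix(κ,Γ). -/

import Mathlib

open Cardinal

/-- Closure of `fix(κ,Γ)` under limits of cofinality in `fix(κ,Γ)`.
Here `J` is the (abstract) collection of ordinal-actions of generic elementary embeddings
arising from forcings in `Γ` with critical point `κ`; each `j ∈ J` is strictly monotone,
and `helem` records the consequence of elementarity: `j` maps a cofinal strictly increasing
sequence `s : cf(α) → α` to a cofinal monotone sequence `t : j(cf α) → j(α)` with
`t (j i) = j (s i)`.  `F = fix(κ,Γ)` is the class of ordinals fixed by all `j ∈ J`.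
If `α` is a limit point of `F` and `cf(α) ∈ F`, then `α ∈ F`. -/
theorem stmt15 (J : Set (Ordinal → Ordinal))
    (hmono : ∀ j ∈ J, StrictMono j)
    (helem : ∀ j ∈ J, ∀ (α δ : Ordinal) (s : Ordinal → Ordinal),
      δ = (Ordinal.cof α).ord →
      (∀ i < δ, s i < α) → (∀ x < α, ∃ i < δ, x ≤ s i) →
      StrictMonoOn s (Set.Iio δ) →
      ∃ t : Ordinal → Ordinal,
        MonotoneOn t (Set.Iio (j δ)) ∧
        (∀ i < δ, t (j i) = j (s i)) ∧
        (∀ i < j δ, t i < j α) ∧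
        (∀ x < j α, ∃ i < j δ, x ≤ t i))
    (F : Set Ordinal) (hF : F = {lam | ∀ j ∈ J, j lam = lam})
    (α : Ordinal)
    (hlim : ∀ β < α, ∃ γ ∈ F, β < γ ∧ γ < α)
    (hcof : (Ordinal.cof α).ord ∈ F) :
    α ∈ F := by
  rcases Ordinal.zero_or_succ_or_isSuccLimit α with rfl | ⟨β, rfl⟩ | hαlim
  · simpa using hcof
  · obtain ⟨γ, _, hβγ, hγ⟩ := hlim β (Order.lt_succ β)
    exact absurd hβγ (Order.lt_succ_iff.mp hγ).not_gt
  · set δ := (Ordinal.cof α).ord with hδdef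
    obtain ⟨f, hf⟩ := Ordinal.exists_fundamental_sequence α
    -- a choice function into F above any β < α
    have hgt : ∀ β, ∃ γ, β < α → (γ ∈ F ∧ β < γ ∧ γ < α) := by
      intro β
      by_cases h : β < α
      · obtain ⟨γ, h1, h2, h3⟩ := hlim β h
        exact ⟨γ, fun _ => ⟨h1, h2, h3⟩⟩
      · exact ⟨0, fun h' => absurd h' h⟩
    choose g hg using hgt
    set f' : Ordinal → Ordinal := fun i => if h : i < δ then f i h else 0 with hf'def
    set s : Ordinal → Ordinal :=
      Ordinal.lt_wf.fix
        (fun i rec => g (f' i ⊔ Ordinal.blsub i (fun i' h => rec i' h))) with hsdef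
    have hs : ∀ i, s i = g (f' i ⊔ Ordinal.blsub i (fun i' _ => s i')) := by
      intro i
      exact Ordinal.lt_wf.fix_eq _ i
    have key : ∀ i, i < δ → s i ∈ F ∧ s i < α ∧ f' i < s i ∧ ∀ i' < i, s i' < s i := by
      intro i
      induction i using Ordinal.induction with
      | h i IH =>
        intro hi
        have harg : f' i ⊔ Ordinal.blsub i (fun i' _ => s i') < α := by
          apply max_lt
          · rw [hf'def]
            simp only [dif_pos hi]
            exact hf.lt hi
          · exact Ordinal.blsub_lt_ord (Cardinal.lt_ord.mp hi)
              (fun i' hi' => ((IH i' hi') (hi'.trans hi)).2.1)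
        obtain ⟨h1, h2, h3⟩ := hg _ harg
        refine ⟨by rw [hs i]; exact h1, by rw [hs i]; exact h3, ?_, ?_⟩
        · rw [hs i]
          exact (le_max_left _ _).trans_lt h2
        · intro i' hi'
          rw [hs i]
          exact ((Ordinal.lt_blsub _ i' hi').trans_le (le_max_right _ _)).trans h2
    have hsa : ∀ i < δ, s i < α := fun i hi => (key i hi).2.1
    have hcofinal : ∀ x < α, ∃ i < δ, x ≤ s i := by
      intro x hx
      rw [← hf.blsub_eq] at hx
      obtain ⟨i, hi, hxi⟩ := Ordinal.lt_blsub_iff.mp hx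
      refine ⟨i, hi, hxi.trans ?_⟩
      have := (key i hi).2.2.1
      rw [hf'def] at this
      simp only [dif_pos (show i < δ from hi)] at this
      exact this.le
    have hsm : StrictMonoOn s (Set.Iio δ) := by
      intro a _ b hb hab
      exact (key b hb).2.2.2 a hab
    rw [hF]
    intro j hj
    have hδfix : j δ = δ := by rw [hF] at hcof; exact hcof j hj
    obtain ⟨t, ht_mono, ht_eq, _, ht_cof⟩ := helem j hj α δ s rfl hsa hcofinal hsm
    refine le_antisymm ?_ (hmono j hj).le_apply
    by_contra h
    push_neg at h
    obtain ⟨i, hi, hti⟩ := ht_cof α h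
    have hiδ : i < δ := hδfix ▸ hi
    have hji : j i < δ := hδfix ▸ hmono j hj hiδ
    have h1 : t i ≤ t (j i) := by
      apply ht_mono (by rw [hδfix]; exact hiδ) (by rw [hδfix]; exact hji)
      exact (hmono j hj).le_apply
    have h2 : t (j i) = j (s i) := ht_eq i hiδ
    have h3 : j (s i) = s i := by
      have := (key i hiδ).1
      rw [hF] at this
      exact this j hj
    have : α ≤ s i := hti.trans (h1.trans_eq (h2.trans h3))
    exact absurd (hsa i hiδ) this.not_gt
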